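/- For any finite set A of positive real numbers, |AA| · |A+A|² ≥ |A|⁴ / (4·⌈log₂|A|⌉). -/

import Mathlib

open Finset Pointwise

namespace Soly

/-- `Bs A l` = elements `b ∈ A` with `l*b ∈ A`. -/
noncomputable def Bs (A : Finset ℝ) (l : ℝ) : Finset ℝ := A.filter fun b => l * b ∈ A

noncomputable def mm (A : Finset ℝ) (l : ℝ) : ℕ := (Bs A l).card

noncomputable def rr (A : Finset ℝ) (x : ℝ) : ℕ := ((A ×ˢ A).filter fun p => p.1 * p.2 = x).card

variable {A : Finset ℝ}

lemma mm_le_card (l : ℝ) : mm A l ≤ A.card :=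
  Finset.card_le_card (Finset.filter_subset _ _)

lemma pos_of_mem_div (hA : ∀ a ∈ A, 0 < a) {l : ℝ} (hl : l ∈ A / A) : 0 < l := by
  rw [Finset.mem_div] at hl
  obtain ⟨a, ha, b, hb, rfl⟩ := hl
  exact div_pos (hA a ha) (hA b hb)

lemma one_le_mm (hA : ∀ a ∈ A, 0 < a) {l : ℝ} (hl : l ∈ A / A) : 1 ≤ mm A l := by
  rw [Finset.mem_div] at hl
  obtain ⟨a, ha, b, hb, rfl⟩ := hl
  have hb0 : b ≠ 0 := ne_of_gt (hA b hb)
  have : b ∈ Bs A (a / b) := by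
    simp only [Bs, Finset.mem_filter]
    refine ⟨hb, ?_⟩
    rw [div_mul_cancel₀ _ hb0]
    exact ha
  exact Finset.card_pos.2 ⟨b, this⟩

lemma sum_rr (A : Finset ℝ) : ∑ x ∈ A * A, rr A x = A.card ^ 2 := by
  have h := Finset.card_eq_sum_card_fiberwise
    (f := fun p : ℝ × ℝ => p.1 * p.2) (s := A ×ˢ A) (t := A * A)
    (fun p hp => by
      rw [Finset.mem_coe, Finset.mem_product] at hp
      exact Finset.mem_coe.2 (Finset.mul_mem_mul hp.1 hp.2))
  rw [Finset.card_product] at h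
  have : ∑ x ∈ A * A, rr A x = ∑ x ∈ A * A, #(filter (fun p : ℝ × ℝ => p.1 * p.2 = x) (A ×ˢ A)) := rfl
  rw [this, ← h]
  ring


noncomputable def Q (A : Finset ℝ) : Finset ((ℝ × ℝ) × (ℝ × ℝ)) :=
  ((A ×ˢ A) ×ˢ (A ×ˢ A)).filter fun q => q.1.1 * q.1.2 = q.2.1 * q.2.2

lemma Q_card_rr (A : Finset ℝ) : (Q A).card = ∑ x ∈ A * A, (rr A x) ^ 2 := by
  have hmap : ∀ q ∈ Q A, q.1.1 * q.1.2 ∈ A * A := by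
    intro q hq
    simp only [Q, Finset.mem_filter, Finset.mem_product] at hq
    exact Finset.mul_mem_mul hq.1.1.1 hq.1.1.2
  rw [Finset.card_eq_sum_card_fiberwise hmap]
  refine Finset.sum_congr rfl fun x hx => ?_
  have hfib : (Q A).filter (fun q => q.1.1 * q.1.2 = x)
      = ((A ×ˢ A).filter fun p => p.1 * p.2 = x) ×ˢ ((A ×ˢ A).filter fun p => p.1 * p.2 = x) := by
    ext q
    simp only [Q, Finset.mem_filter, Finset.mem_product, Finset.filter_filter]
    constructor
    · rintro ⟨⟨hm1, hm2⟩, he, hx⟩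
      exact ⟨⟨hm1, hx⟩, hm2, he.symm.trans hx⟩
    · rintro ⟨⟨hm1, hx⟩, hm2, hy⟩
      exact ⟨⟨hm1, hm2⟩, hx.trans hy.symm, hx⟩
  rw [hfib, Finset.card_product, rr, sq]

lemma Q_card_mm (hA : ∀ a ∈ A, 0 < a) : (Q A).card = ∑ l ∈ A / A, (mm A l) ^ 2 := by
  have hmap : ∀ q ∈ Q A, q.1.1 / q.2.1 ∈ A / A := by
    intro q hq
    simp only [Q, Finset.mem_filter, Finset.mem_product] at hq
    exact Finset.div_mem_div hq.1.1.1 hq.1.2.1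
  rw [Finset.card_eq_sum_card_fiberwise hmap]
  refine Finset.sum_congr rfl fun l hl => ?_
  have hl0 : 0 < l := pos_of_mem_div hA hl
  have hfib : ((Q A).filter (fun q => q.1.1 / q.2.1 = l)).card = ((Bs A l) ×ˢ (Bs A l)).card := by
    apply Finset.card_bij' (fun q _ => (q.2.1, q.1.2))
      (fun p _ => ((l * p.1, p.2), (p.1, l * p.2)))
    · intro q hq
      simp only [Q, Finset.mem_filter, Finset.mem_product] at hq
      obtain ⟨⟨⟨⟨ha, hb⟩, hc, hd⟩, heq⟩, hdiv⟩ := hq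
      have hc0 : q.2.1 ≠ 0 := ne_of_gt (hA _ hc)
      have hac : q.1.1 = l * q.2.1 := by
        field_simp at hdiv; linarith [hdiv]
      have hbd : q.2.2 = l * q.1.2 := by
        rw [hac] at heq
        have := mul_left_cancel₀ hc0 (by linarith [heq] : q.2.1 * q.2.2 = q.2.1 * (l * q.1.2))
        linarith [this]
      simp only [Bs, Finset.mem_product, Finset.mem_filter]
      exact ⟨⟨hc, hac ▸ ha⟩, hb, hbd ▸ hd⟩
    · intro p hp
      simp only [Bs, Finset.mem_product, Finset.mem_filter] at hp
      obtain ⟨⟨hc, ha⟩, hb, hd⟩ := hp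
      have hc0 : p.1 ≠ 0 := ne_of_gt (hA _ hc)
      simp only [Q, Finset.mem_filter, Finset.mem_product]
      refine ⟨⟨⟨⟨ha, hb⟩, hc, hd⟩, by ring⟩, by field_simp⟩
    · intro q hq
      simp only [Q, Finset.mem_filter, Finset.mem_product] at hq
      obtain ⟨⟨⟨⟨ha, hb⟩, hc, hd⟩, heq⟩, hdiv⟩ := hq
      have hc0 : q.2.1 ≠ 0 := ne_of_gt (hA _ hc)
      have hac : q.1.1 = l * q.2.1 := by
        field_simp at hdiv; linarith [hdiv]
      have hbd : q.2.2 = l * q.1.2 := by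
        rw [hac] at heq
        have := mul_left_cancel₀ hc0 (by linarith [heq] : q.2.1 * q.2.2 = q.2.1 * (l * q.1.2))
        linarith [this]
      ext <;> simp [hac.symm, hbd.symm]
    · intro p hp
      rfl
  rw [hfib, Finset.card_product, mm, sq]


lemma cs_bound (hA : ∀ a ∈ A, 0 < a) :
    A.card ^ 4 ≤ (A * A).card * ∑ l ∈ A / A, (mm A l) ^ 2 := by
  have key : ((A.card : ℝ) ^ 2) ^ 2 ≤ (A * A).card * ∑ l ∈ A / A, ((mm A l : ℝ)) ^ 2 := by
    have h1 : ((A.card : ℝ) ^ 2) = ∑ x ∈ A * A, (rr A x : ℝ) := by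
      rw [← Nat.cast_sum]
      exact_mod_cast congrArg (Nat.cast (R := ℝ)) (sum_rr A).symm
    rw [h1]
    calc (∑ x ∈ A * A, (rr A x : ℝ)) ^ 2
        ≤ (A * A).card * ∑ x ∈ A * A, (rr A x : ℝ) ^ 2 :=
          sq_sum_le_card_mul_sum_sq
      _ = (A * A).card * ∑ l ∈ A / A, ((mm A l : ℝ)) ^ 2 := by
          congr 1
          have : ∑ x ∈ A * A, (rr A x) ^ 2 = ∑ l ∈ A / A, (mm A l) ^ 2 :=
            (Q_card_rr A).symm.trans (Q_card_mm hA)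
          exact_mod_cast congrArg (Nat.cast (R := ℝ)) this
  have : ((A.card : ℝ)) ^ 4 ≤ ((A * A).card * ∑ l ∈ A / A, (mm A l) ^ 2 : ℕ) := by
    push_cast
    calc ((A.card : ℝ)) ^ 4 = ((A.card : ℝ) ^ 2) ^ 2 := by ring
      _ ≤ _ := key
  exact_mod_cast this

/-- The geometric core: for an increasing sequence of slopes, sums of points on consecutive
rays are distinct elements of `(A+A) × (A+A)`. -/
lemma pair_sum_le (hA : ∀ a ∈ A, 0 < a) (f : ℕ → ℝ) (T : ℕ)
    (hmem : ∀ i ≤ T, f i ∈ A / A)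
    (hmono : ∀ i j, i < j → j ≤ T → f i < f j) :
    ∑ i ∈ Finset.range T, mm A (f i) * mm A (f (i + 1)) ≤ (A + A).card ^ 2 := by
  classical
  set F : ℕ → Finset (ℝ × ℝ) := fun i =>
    ((Bs A (f i)) ×ˢ (Bs A (f (i + 1)))).image
      (fun p => (p.1 + p.2, f i * p.1 + f (i + 1) * p.2)) with hF
  have hpos : ∀ i ≤ T, 0 < f i := fun i hi => pos_of_mem_div hA (hmem i hi)
  have hcard : ∀ i ∈ Finset.range T, (F i).card = mm A (f i) * mm A (f (i + 1)) := by
    intro i hi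
    rw [Finset.mem_range] at hi
    have hlt : f i < f (i + 1) := hmono i (i + 1) (Nat.lt_succ_self i) hi
    have hinj : Set.InjOn (fun p : ℝ × ℝ => (p.1 + p.2, f i * p.1 + f (i + 1) * p.2))
        ((((Bs A (f i)) ×ˢ (Bs A (f (i + 1)))) : Finset (ℝ × ℝ)) : Set (ℝ × ℝ)) := by
      intro p hp q hq hpq
      have e1 : p.1 + p.2 = q.1 + q.2 := congrArg Prod.fst hpq
      have e2 : f i * p.1 + f (i + 1) * p.2 = f i * q.1 + f (i + 1) * q.2 :=
        congrArg Prod.snd hpq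
      have h3 : (f (i + 1) - f i) * (p.2 - q.2) = 0 := by linear_combination e2 - f i * e1
      have h4 : p.2 = q.2 := by
        rcases mul_eq_zero.1 h3 with h | h
        · exact absurd h (by linarith)
        · linarith
      have h5 : p.1 = q.1 := by linarith
      exact Prod.ext h5 h4
    rw [hF]
    simp only []
    rw [Finset.card_image_of_injOn hinj, Finset.card_product]
    rfl
  have hsub : ∀ i ∈ Finset.range T, F i ⊆ (A + A) ×ˢ (A + A) := by
    intro i hi
    rw [hF]
    intro x hx
    simp only [Finset.mem_image, Finset.mem_product, Bs, Finset.mem_filter] at hx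
    obtain ⟨p, ⟨⟨hb, hb'⟩, hc, hc'⟩, rfl⟩ := hx
    exact Finset.mem_product.2 ⟨Finset.add_mem_add hb hc, Finset.add_mem_add hb' hc'⟩
  have hdisj : ∀ i ∈ Finset.range T, ∀ j ∈ Finset.range T, i ≠ j → Disjoint (F i) (F j) := by
    have key : ∀ i j, i < j → j < T → Disjoint (F i) (F j) := by
      intro i j hij hj
      rw [Finset.disjoint_left]
      intro x hxi hxj
      simp only [hF, Finset.mem_image, Finset.mem_product, Bs, Finset.mem_filter] at hxi hxj
      obtain ⟨p, ⟨⟨hb, _⟩, hc, _⟩, hx1⟩ := hxi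
      obtain ⟨q, ⟨⟨hb', _⟩, hc', _⟩, hx2⟩ := hxj
      have hbp : 0 < p.1 := hA _ hb
      have hcp : 0 < p.2 := hA _ hc
      have hbq : 0 < q.1 := hA _ hb'
      have hcq : 0 < q.2 := hA _ hc'
      have hx1a : p.1 + p.2 = x.1 := congrArg Prod.fst hx1
      have hx1b : f i * p.1 + f (i + 1) * p.2 = x.2 := congrArg Prod.snd hx1
      have hx2a : q.1 + q.2 = x.1 := congrArg Prod.fst hx2
      have hx2b : f j * q.1 + f (j + 1) * q.2 = x.2 := congrArg Prod.snd hx2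
      have hii : f i < f (i + 1) := hmono i (i + 1) (Nat.lt_succ_self i) (by omega)
      have hjj : f j < f (j + 1) := hmono j (j + 1) (Nat.lt_succ_self j) (by omega)
      have hmid : f (i + 1) ≤ f j := by
        rcases Nat.lt_or_ge (i + 1) j with h | h
        · exact le_of_lt (hmono (i + 1) j h (by omega))
        · have : i + 1 = j := by omega
          exact le_of_eq (by rw [this])
      -- x.2 < f (i+1) * x.1 ≤ f j * x.1 < x.2
      have h1 : x.2 < f (i + 1) * x.1 := by
        rw [← hx1a, ← hx1b]; nlinarith
      have h2 : f j * x.1 < x.2 := by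
        rw [← hx2a, ← hx2b]; nlinarith
      have hx1pos : 0 < x.1 := by rw [← hx1a]; linarith
      nlinarith
    intro i hi j hj hij
    rw [Finset.mem_range] at hi hj
    rcases Nat.lt_or_ge i j with h | h
    · exact key i j h hj
    · exact (key j i (by omega) hi).symm
  calc ∑ i ∈ Finset.range T, mm A (f i) * mm A (f (i + 1))
      = ∑ i ∈ Finset.range T, (F i).card := (Finset.sum_congr rfl hcard).symm
    _ = ((Finset.range T).biUnion F).card := (Finset.card_biUnion hdisj).symm
    _ ≤ ((A + A) ×ˢ (A + A)).card := Finset.card_le_card (Finset.biUnion_subset.2 hsub)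
    _ = (A + A).card ^ 2 := by rw [Finset.card_product]; ring


lemma class_sum_le (hA : ∀ a ∈ A, 0 < a) (C : Finset ℝ) (hC : C ⊆ A / A)
    (hratio : ∀ l ∈ C, ∀ l' ∈ C, mm A l ≤ 2 * mm A l') :
    ∑ l ∈ C, (mm A l) ^ 2 ≤ 2 * (A + A).card ^ 2 + A.card ^ 2 := by
  classical
  rcases C.eq_empty_or_nonempty with rfl | hne
  · simp
  obtain ⟨T, hT⟩ : ∃ T, C.card = T + 1 :=
    ⟨C.card - 1, (Nat.succ_pred_eq_of_pos (Finset.card_pos.2 hne)).symm⟩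
  set w := C.orderEmbOfFin hT with hw
  have hwmem : ∀ i : Fin (T + 1), w i ∈ C := fun i => C.orderEmbOfFin_mem hT i
  -- rewrite the sum over C as a sum over Fin (T+1)
  have hsum : ∀ g : ℝ → ℕ, ∑ l ∈ C, g l = ∑ i : Fin (T + 1), g (w i) := by
    intro g
    rw [← Finset.sum_image (f := g) (g := fun i : Fin (T + 1) => w i)
      (by intro x _ y _ h; exact w.injective h)]
    congr 1
    symm
    apply Finset.eq_of_subset_of_card_le
    · intro x hx
      simp only [Finset.mem_image] at hx
      obtain ⟨i, _, rfl⟩ := hx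
      exact hwmem i
    · rw [Finset.card_image_of_injective _ w.injective, Finset.card_univ,
        Fintype.card_fin, hT]
  rw [hsum]
  rw [Fin.sum_univ_castSucc]
  have hlast : (mm A (w (Fin.last T))) ^ 2 ≤ A.card ^ 2 :=
    Nat.pow_le_pow_left (mm_le_card _) 2
  have hmain : ∑ i : Fin T, (mm A (w i.castSucc)) ^ 2 ≤ 2 * (A + A).card ^ 2 := by
    set f : ℕ → ℝ := fun i => if h : i < T + 1 then w ⟨i, h⟩ else 0 with hf
    have hfw : ∀ (i : ℕ) (h : i < T + 1), f i = w ⟨i, h⟩ := by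
      intro i h
      show (if hh : i < T + 1 then w ⟨i, hh⟩ else 0) = w ⟨i, h⟩
      exact dif_pos h
    have step1 : ∑ i : Fin T, (mm A (w i.castSucc)) ^ 2
        ≤ 2 * ∑ i ∈ Finset.range T, mm A (f i) * mm A (f (i + 1)) := by
      rw [Finset.mul_sum, ← Fin.sum_univ_eq_sum_range
        (fun i => 2 * (mm A (f i) * mm A (f (i + 1))))]
      apply Finset.sum_le_sum
      intro i _
      have h1 : (i : ℕ) < T + 1 := by omega
      have h2 : (i : ℕ) + 1 < T + 1 := by omega
      rw [hfw i h1, hfw (i + 1) h2]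
      have hcs : w i.castSucc = w ⟨(i : ℕ), h1⟩ := by congr 1
      rw [hcs]
      have hr : mm A (w ⟨(i : ℕ), h1⟩) ≤ 2 * mm A (w ⟨(i : ℕ) + 1, h2⟩) :=
        hratio _ (hwmem _) _ (hwmem _)
      calc (mm A (w ⟨(i : ℕ), h1⟩)) ^ 2
          = mm A (w ⟨(i : ℕ), h1⟩) * mm A (w ⟨(i : ℕ), h1⟩) := sq _
        _ ≤ mm A (w ⟨(i : ℕ), h1⟩) * (2 * mm A (w ⟨(i : ℕ) + 1, h2⟩)) :=
            Nat.mul_le_mul_left _ hr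
        _ = 2 * (mm A (w ⟨(i : ℕ), h1⟩) * mm A (w ⟨(i : ℕ) + 1, h2⟩)) := by ring
    have step2 : ∑ i ∈ Finset.range T, mm A (f i) * mm A (f (i + 1)) ≤ (A + A).card ^ 2 := by
      apply pair_sum_le hA f T
      · intro i hi
        rw [hfw i (by omega)]
        exact hC (hwmem _)
      · intro i j hij hj
        rw [hfw i (by omega), hfw j (by omega)]
        exact w.strictMono (by exact Fin.mk_lt_mk.2 hij)
    calc ∑ i : Fin T, (mm A (w i.castSucc)) ^ 2
        ≤ 2 * ∑ i ∈ Finset.range T, mm A (f i) * mm A (f (i + 1)) := step1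
      _ ≤ 2 * (A + A).card ^ 2 := Nat.mul_le_mul_left _ step2
  omega


lemma energy_le (hA : ∀ a ∈ A, 0 < a) (h2 : 2 ≤ A.card) :
    ∑ l ∈ A / A, (mm A l) ^ 2 ≤ 4 * Nat.clog 2 A.card * (A + A).card ^ 2 := by
  classical
  set n := A.card with hn
  set K := Nat.clog 2 n with hKdef
  set S := (A + A).card with hS
  have hK1 : 1 ≤ K := Nat.clog_pos one_lt_two h2
  have hAne : A.Nonempty := Finset.card_pos.1 (by omega)
  have hnS : n ≤ S := Finset.card_le_card_add_left hAne
  have hmap : ∀ l ∈ A / A, Nat.log 2 (mm A l) ∈ Finset.range (K + 1) := by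
    intro l _
    rw [Finset.mem_range]
    have h1 : Nat.log 2 (mm A l) ≤ Nat.log 2 n := Nat.log_mono_right (mm_le_card l)
    have h2' : Nat.log 2 n ≤ K := Nat.log_le_clog 2 n
    omega
  have hsplit : ∑ l ∈ A / A, (mm A l) ^ 2
      = ∑ k ∈ Finset.range (K + 1),
          ∑ l ∈ (A / A).filter (fun l => Nat.log 2 (mm A l) = k), (mm A l) ^ 2 :=
    (Finset.sum_fiberwise_of_maps_to hmap _).symm
  rw [hsplit, Finset.sum_range_succ]
  -- bound for classes k < K
  have hclass : ∀ k ∈ Finset.range K,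
      ∑ l ∈ (A / A).filter (fun l => Nat.log 2 (mm A l) = k), (mm A l) ^ 2
        ≤ 2 * S ^ 2 + n ^ 2 := by
    intro k _
    apply class_sum_le hA _ (Finset.filter_subset _ _)
    intro l hl l' hl'
    rw [Finset.mem_filter] at hl hl'
    have hub : mm A l < 2 ^ (k + 1) := by
      have := Nat.lt_pow_succ_log_self (b := 2) (by norm_num) (mm A l)
      rwa [hl.2] at this
    have hlb : 2 ^ k ≤ mm A l' := by
      have h0 : mm A l' ≠ 0 := by
        have := one_le_mm hA hl'.1; omega
      have := Nat.pow_log_le_self 2 h0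
      rwa [hl'.2] at this
    have hp : 2 ^ (k + 1) = 2 * 2 ^ k := by ring
    omega
  have hsum1 : ∑ k ∈ Finset.range K,
      ∑ l ∈ (A / A).filter (fun l => Nat.log 2 (mm A l) = k), (mm A l) ^ 2
        ≤ K * (3 * S ^ 2) := by
    calc _ ≤ ∑ _k ∈ Finset.range K, (2 * S ^ 2 + n ^ 2) := Finset.sum_le_sum hclass
      _ = K * (2 * S ^ 2 + n ^ 2) := by rw [Finset.sum_const, Finset.card_range, smul_eq_mul]
      _ ≤ K * (3 * S ^ 2) := by
          have : n ^ 2 ≤ S ^ 2 := Nat.pow_le_pow_left hnS 2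
          exact Nat.mul_le_mul_left _ (by omega)
  -- the top class is contained in {1}
  have htop : ∑ l ∈ (A / A).filter (fun l => Nat.log 2 (mm A l) = K), (mm A l) ^ 2
      ≤ S ^ 2 := by
    set klass := (A / A).filter (fun l => Nat.log 2 (mm A l) = K) with hkl
    have hsub1 : klass ⊆ {1} := by
      intro l hl
      rw [hkl, Finset.mem_filter] at hl
      obtain ⟨hlD, hlog⟩ := hl
      have hmn : mm A l = n := by
        have h0 : mm A l ≠ 0 := by have := one_le_mm hA hlD; omega
        have hge : 2 ^ K ≤ mm A l := by
          have := Nat.pow_log_le_self 2 h0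
          rwa [hlog] at this
        have hle : mm A l ≤ n := mm_le_card l
        have hnl : n ≤ 2 ^ K := Nat.le_pow_clog one_lt_two n
        omega
      have hBs : Bs A l = A :=
        Finset.eq_of_subset_of_card_le (Finset.filter_subset _ _) (le_of_eq hmn.symm)
      have hmul : ∀ b ∈ A, l * b ∈ A := by
        intro b hb
        have : b ∈ Bs A l := hBs.symm ▸ hb
        exact (Finset.mem_filter.1 this).2
      have hl0 : 0 < l := pos_of_mem_div hA hlD
      rw [Finset.mem_singleton]
      rcases lt_trichotomy l 1 with h | h | h
      · exfalso
        have hmin := A.min'_mem hAne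
        have h1 : l * A.min' hAne ∈ A := hmul _ hmin
        have h2' := A.min'_le _ h1
        have h3 : 0 < A.min' hAne := hA _ hmin
        nlinarith
      · exact h
      · exfalso
        have hmax := A.max'_mem hAne
        have h1 : l * A.max' hAne ∈ A := hmul _ hmax
        have h2' := A.le_max' _ h1
        have h3 : 0 < A.max' hAne := hA _ hmax
        nlinarith
    have hb : ∑ l ∈ klass, (mm A l) ^ 2 ≤ klass.card * n ^ 2 := by
      have := Finset.sum_le_card_nsmul klass (fun l => (mm A l) ^ 2) (n ^ 2)
        (fun l _ => Nat.pow_le_pow_left (mm_le_card l) 2)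
      simpa [smul_eq_mul] using this
    have hc : klass.card ≤ 1 := by
      have := Finset.card_le_card hsub1
      simpa using this
    have : ∑ l ∈ klass, (mm A l) ^ 2 ≤ n ^ 2 := le_trans hb (by
      calc klass.card * n ^ 2 ≤ 1 * n ^ 2 := Nat.mul_le_mul_right _ hc
        _ = n ^ 2 := one_mul _)
    exact le_trans this (Nat.pow_le_pow_left hnS 2)
  have htotal : K * (3 * S ^ 2) + S ^ 2 ≤ 4 * K * S ^ 2 := by
    have h1 : S ^ 2 ≤ K * S ^ 2 := Nat.le_mul_of_pos_left _ (by omega)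
    nlinarith
  omega

end Soly

theorem stmt_0 (A : Finset ℝ) (hA : ∀ a ∈ A, 0 < a) (h2 : 2 ≤ A.card) :
    ((A * A).card : ℝ) * ((A + A).card : ℝ) ^ 2 ≥
      (A.card : ℝ) ^ 4 / (4 * (Nat.clog 2 A.card : ℝ)) := by
  have hK : 0 < Nat.clog 2 A.card := Nat.clog_pos one_lt_two h2
  have hnat : A.card ^ 4 ≤ (A * A).card * (4 * Nat.clog 2 A.card * (A + A).card ^ 2) := by
    calc A.card ^ 4 ≤ (A * A).card * ∑ l ∈ A / A, (Soly.mm A l) ^ 2 := Soly.cs_bound hA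
      _ ≤ (A * A).card * (4 * Nat.clog 2 A.card * (A + A).card ^ 2) :=
          Nat.mul_le_mul_left _ (Soly.energy_le hA h2)
  rw [ge_iff_le, div_le_iff₀ (by positivity)]
  have := (Nat.cast_le (α := ℝ)).2 hnat
  push_cast at this
  nlinarith [this]
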